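/- Under stochastic unbounded delays, for every k one has E‖d^k‖₂² ≤ Σ_{i=0}^{k−1} c_{k−1−i}·E‖Δ^i‖₂². -/

import Mathlib

open MeasureTheory Filter
open scoped BigOperators

lemma euclid_norm_sq {N : ℕ} (v : EuclideanSpace ℝ (Fin N)) :
    ‖v‖ ^ 2 = ∑ i, (v i) ^ 2 := by
  rw [EuclideanSpace.norm_eq, Real.sq_sqrt (Finset.sum_nonneg fun i _ => sq_nonneg _)]
  simp [Real.norm_eq_abs, sq_abs]

lemma ptwise_bound {N : ℕ} (x : ℕ → EuclideanSpace ℝ (Fin N)) (y : EuclideanSpace ℝ (Fin N))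
    (jj : Fin N → ℕ) (k : ℕ) (hy : ∀ i, y i = x (k - jj i) i) :
    ‖x k - y‖ ^ 2 ≤ ((Finset.univ.sup jj : ℕ) : ℝ) *
      ∑ l ∈ Finset.Ico (k - Finset.univ.sup jj) k, ‖x (l+1) - x l‖ ^ 2 := by
  set J := Finset.univ.sup jj with hJ
  have hterm : ∀ i : Fin N, ((x k - y) i) ^ 2 ≤
      ((Finset.Ico (k - J) k).card : ℝ) * ∑ l ∈ Finset.Ico (k - J) k, (x (l+1) i - x l i) ^ 2 := by
    intro i
    have h1 : (x k - y) i = ∑ l ∈ Finset.Ico (k - jj i) k, (x (l+1) i - x l i) := by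
      rw [Finset.sum_Ico_eq_sub _ (Nat.sub_le k (jj i)),
        Finset.sum_range_sub (f := fun l => x l i), Finset.sum_range_sub (f := fun l => x l i)]
      simp [PiLp.sub_apply, hy i]
    have h2 : |(x k - y) i| ≤ ∑ l ∈ Finset.Ico (k - J) k, |x (l+1) i - x l i| := by
      rw [h1]
      refine (Finset.abs_sum_le_sum_abs _ _).trans ?_
      refine Finset.sum_le_sum_of_subset_of_nonneg ?_ (fun _ _ _ => abs_nonneg _)
      exact Finset.Ico_subset_Ico (Nat.sub_le_sub_left (Finset.le_sup (Finset.mem_univ i)) k) le_rfl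
    calc ((x k - y) i) ^ 2 = |(x k - y) i| ^ 2 := (sq_abs _).symm
      _ ≤ (∑ l ∈ Finset.Ico (k - J) k, |x (l+1) i - x l i|) ^ 2 := by
          exact pow_le_pow_left₀ (abs_nonneg _) h2 2
      _ ≤ ((Finset.Ico (k - J) k).card : ℝ) * ∑ l ∈ Finset.Ico (k - J) k, |x (l+1) i - x l i| ^ 2 :=
          sq_sum_le_card_mul_sum_sq
      _ = ((Finset.Ico (k - J) k).card : ℝ) *
            ∑ l ∈ Finset.Ico (k - J) k, (x (l+1) i - x l i) ^ 2 := by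
          simp [sq_abs]
  calc ‖x k - y‖ ^ 2 = ∑ i, ((x k - y) i) ^ 2 := euclid_norm_sq _
    _ ≤ ∑ i : Fin N, ((Finset.Ico (k - J) k).card : ℝ) *
          ∑ l ∈ Finset.Ico (k - J) k, (x (l+1) i - x l i) ^ 2 :=
        Finset.sum_le_sum fun i _ => hterm i
    _ = ((Finset.Ico (k - J) k).card : ℝ) * ∑ l ∈ Finset.Ico (k - J) k, ‖x (l+1) - x l‖ ^ 2 := by
        rw [← Finset.mul_sum, Finset.sum_comm]
        congr 1
        refine Finset.sum_congr rfl fun l _ => ?_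
        rw [euclid_norm_sq]
        exact Finset.sum_congr rfl fun i _ => by simp [PiLp.sub_apply]
    _ ≤ (J : ℝ) * ∑ l ∈ Finset.Ico (k - J) k, ‖x (l+1) - x l‖ ^ 2 := by
        refine mul_le_mul_of_nonneg_right ?_
          (Finset.sum_nonneg fun l _ => sq_nonneg _)
        rw [Nat.card_Ico]
        exact_mod_cast (by omega : k - (k - J) ≤ J)


def sigmaAlg {N : ℕ} {Ω : Type} [MeasurableSpace Ω]
    (X : ℕ → Ω → EuclideanSpace ℝ (Fin N)) (jv : ℕ → Ω → Fin N → ℕ) (k : ℕ) :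
    MeasurableSpace Ω :=
  (⨆ l ∈ Finset.range (k+1), MeasurableSpace.comap (X l) inferInstance) ⊔
    (⨆ l ∈ Finset.range (k+1), MeasurableSpace.comap (jv l) inferInstance)

lemma Bmeas {Ω : Type} [mΩ : MeasurableSpace Ω] {N : ℕ} (k j : ℕ)
    (X : ℕ → Ω → EuclideanSpace ℝ (Fin N)) (hX : ∀ l, l ≤ k → Measurable (X l)) :
    Measurable (fun ω => (j : ENNReal) *
      ∑ i ∈ Finset.Ico (k - j) k, ENNReal.ofReal (‖X (i+1) ω - X i ω‖ ^ 2)) := by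
  refine Measurable.const_mul ?_ _
  refine Finset.measurable_sum _ fun i hi => ?_
  have h2 := (Finset.mem_Ico.mp hi).2
  exact ENNReal.measurable_ofReal.comp (((hX (i+1) h2).sub (hX i h2.le)).norm.pow_const 2)

lemma key_lemma {Ω : Type} {m : MeasurableSpace Ω} [mΩ : MeasurableSpace Ω] (hm : m ≤ mΩ)
    (μ : MeasureTheory.Measure Ω) (S : Set Ω) (c : ENNReal)
    (hb : ∀ A : Set Ω, MeasurableSet[m] A → μ (A ∩ S) ≤ c * μ A)
    (g : Ω → ENNReal) (hg : Measurable[m] g) :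
    ∫⁻ ω in S, g ω ∂μ ≤ c * ∫⁻ ω, g ω ∂μ := by
  have h2 : (μ.restrict S).trim hm ≤ c • μ.trim hm := by
    refine Measure.le_iff.mpr fun A hA => ?_
    rw [trim_measurableSet_eq hm hA, Measure.smul_apply, smul_eq_mul,
      trim_measurableSet_eq hm hA, Measure.restrict_apply (hm A hA)]
    exact hb A hA
  calc ∫⁻ ω in S, g ω ∂μ
      = ∫⁻ ω, g ω ∂((μ.restrict S).trim hm) := (lintegral_trim hm hg).symm
    _ ≤ ∫⁻ ω, g ω ∂(c • μ.trim hm) := lintegral_mono' h2 le_rfl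
    _ = c * ∫⁻ ω, g ω ∂(μ.trim hm) := lintegral_smul_measure _ _
    _ = c * ∫⁻ ω, g ω ∂μ := by rw [lintegral_trim hm hg]

theorem expected_delay_bound
    (N : ℕ) (hN : 0 < N)
    (f : EuclideanSpace ℝ (Fin N) → ℝ)
    (L : ℝ) (hL : 0 < L)
    (hdiff : Differentiable ℝ f)
    (hlip : ∀ y z : EuclideanSpace ℝ (Fin N), ‖gradient f y - gradient f z‖ ≤ L * ‖y - z‖)
    (fmin : ℝ) (hfmin : ∀ y, fmin ≤ f y)
    (Ω : Type) [MeasurableSpace Ω] (μ : Measure Ω) [IsProbabilityMeasure μ]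
    (X : ℕ → Ω → EuclideanSpace ℝ (Fin N)) (hXm : ∀ k, Measurable (X k))
    (jv : ℕ → Ω → Fin N → ℕ) (hjvm : ∀ k, Measurable (jv k))
    (hjk : ∀ k ω i, jv k ω i ≤ k)
    (xhat : ℕ → Ω → EuclideanSpace ℝ (Fin N))
    (hxhat : ∀ k ω i, xhat k ω i = X (k - jv k ω i) ω i)
    (ik : ℕ → Ω → Fin N) (hikm : ∀ k, Measurable (ik k))
    (p : ℕ → ℝ) (hp : ∀ j, 0 ≤ p j)
    (hpbound : ∀ k j : ℕ, ∀ A : Set Ω,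
      MeasurableSet[(⨆ l ∈ Finset.range (k+1), MeasurableSpace.comap (X l) inferInstance) ⊔
        (⨆ l ∈ Finset.range (k+1), MeasurableSpace.comap (jv l) inferInstance)] A →
      μ (A ∩ {ω | Finset.univ.sup (jv k ω) = j}) ≤ ENNReal.ofReal (p j) * μ A)
    (s cf : ℕ → ℝ)
    (hs : ∀ l : ℕ, HasSum (fun j : ℕ => if l ≤ j then (j : ℝ) * p j else 0) (s l))
    (hcf : ∀ i : ℕ, HasSum (fun l : ℕ => if i ≤ l then s l else 0) (cf i))
    (γ : ℝ) (hγ : 0 < γ)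
    (hupd : ∀ k ω, X (k+1) ω (ik k ω) = X k ω (ik k ω) - (γ / L) * gradient f (xhat k ω) (ik k ω))
    (hfix : ∀ k ω i, i ≠ ik k ω → X (k+1) ω i = X k ω i)
    (hIf : ∀ k, Integrable (fun ω => f (X k ω)) μ)
    (hID2 : ∀ k, Integrable (fun ω => ‖X (k+1) ω - X k ω‖ ^ 2) μ)
    (hId2 : ∀ k, Integrable (fun ω => ‖X k ω - xhat k ω‖ ^ 2) μ)
    :
    ∀ k : ℕ,
      ∫ ω, ‖X k ω - xhat k ω‖ ^ 2 ∂μ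
        ≤ ∑ i ∈ Finset.range k, cf (k - 1 - i) * ∫ ω, ‖X (i+1) ω - X i ω‖ ^ 2 ∂μ := by
  -- nonnegativity of s and cf
  have hsn : ∀ l, 0 ≤ s l := fun l =>
    HasSum.nonneg (fun j => by
      split_ifs with h
      · exact mul_nonneg (Nat.cast_nonneg j) (hp j)
      · exact le_rfl) (hs l)
  have hcfn : ∀ n, 0 ≤ cf n := fun n =>
    HasSum.nonneg (fun l => by
      split_ifs with h
      · exact hsn l
      · exact le_rfl) (hcf n)
  intro k
  have hm : sigmaAlg X jv k ≤ ‹MeasurableSpace Ω› := by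
    refine sup_le ?_ ?_
    · exact iSup_le fun l => iSup_le fun _ => (hXm l).comap_le
    · exact iSup_le fun l => iSup_le fun _ => (hjvm l).comap_le
  have hXmm : ∀ l, l ≤ k → Measurable[sigmaAlg X jv k] (X l) := fun l hl =>
    Measurable.of_comap_le
      (le_trans
        (le_iSup₂ (f := fun l (_ : l ∈ Finset.range (k+1)) =>
          MeasurableSpace.comap (X l) inferInstance) l
          (Finset.mem_range.mpr (Nat.lt_succ_of_le hl)))
        le_sup_left)
  -- the sup delay
  have hJk : ∀ ω, Finset.univ.sup (jv k ω) ≤ k := fun ω => Finset.sup_le fun i _ => hjk k ω i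
  have hJset : ∀ j : ℕ, MeasurableSet {ω | Finset.univ.sup (jv k ω) = j} := by
    intro j
    have h : {ω | Finset.univ.sup (jv k ω) = j} =
        jv k ⁻¹' {g : Fin N → ℕ | Finset.univ.sup g = j} := rfl
    rw [h]
    exact (hjvm k) ((Set.to_countable _).measurableSet)
  -- measurability of xhat k
  have hxhatm : Measurable (xhat k) := by
    refine (WithLp.measurable_toLp 2 _).comp (f := fun ω => WithLp.ofLp (xhat k ω)) ?_
    apply measurable_pi_lambda
    intro i
    show Measurable (fun ω => xhat k ω i)
    have heq : (fun ω => xhat k ω i)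
        = fun ω => ∑ mm ∈ Finset.range (k+1), if jv k ω i = mm then X (k - mm) ω i else 0 := by
      funext ω
      rw [hxhat k ω i,
        Finset.sum_ite_eq (Finset.range (k+1)) (jv k ω i) (fun mm => X (k - mm) ω i),
        if_pos (Finset.mem_range.mpr (Nat.lt_succ_of_le (hjk k ω i)))]
    rw [heq]
    refine Finset.measurable_sum _ fun mm _ => Measurable.ite ?_ ?_ measurable_const
    · exact ((measurable_pi_apply i).comp (hjvm k)) (measurableSet_singleton mm)
    · exact (measurable_pi_apply i).comp ((WithLp.measurable_ofLp 2 _).comp (hXm (k - mm)))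
  -- ENNReal-valued squared-increment integrands
  have hGm : ∀ i : ℕ, Measurable fun ω => ENNReal.ofReal (‖X (i+1) ω - X i ω‖ ^ 2) := fun i =>
    ENNReal.measurable_ofReal.comp (((hXm (i+1)).sub (hXm i)).norm.pow_const 2)
  set B : ℕ → Ω → ENNReal := fun j ω =>
    (j : ENNReal) * ∑ i ∈ Finset.Ico (k - j) k, ENNReal.ofReal (‖X (i+1) ω - X i ω‖ ^ 2)
    with hB_def
  have hBm : ∀ j, Measurable (B j) := fun j => Bmeas k j X fun l _ => hXm l
  have hBmm : ∀ j, Measurable[sigmaAlg X jv k] (B j) := fun j =>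
    Bmeas (mΩ := sigmaAlg X jv k) k j X hXmm
  -- pointwise bound
  have hpoint : ∀ ω, ENNReal.ofReal (‖X k ω - xhat k ω‖ ^ 2) ≤
      ∑ j ∈ Finset.range (k+1),
        Set.indicator {ω' | Finset.univ.sup (jv k ω') = j} (B j) ω := by
    intro ω
    have hsum : ∑ j ∈ Finset.range (k+1),
        Set.indicator {ω' | Finset.univ.sup (jv k ω') = j} (B j) ω
        = B (Finset.univ.sup (jv k ω)) ω := by
      rw [Finset.sum_eq_single_of_mem (Finset.univ.sup (jv k ω))
        (Finset.mem_range.mpr (Nat.lt_succ_of_le (hJk ω)))]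
      · refine Set.indicator_of_mem ?_ _
        show Finset.univ.sup (jv k ω) = Finset.univ.sup (jv k ω)
        rfl
      · intro j _ hj
        refine Set.indicator_of_notMem ?_ _
        show ¬ Finset.univ.sup (jv k ω) = j
        exact fun h => hj h.symm
    rw [hsum]
    have h := ptwise_bound (fun l => X l ω) (xhat k ω) (jv k ω) k (fun i => hxhat k ω i)
    calc ENNReal.ofReal (‖X k ω - xhat k ω‖ ^ 2)
        ≤ ENNReal.ofReal (((Finset.univ.sup (jv k ω) : ℕ) : ℝ) *
            ∑ l ∈ Finset.Ico (k - Finset.univ.sup (jv k ω)) k, ‖X (l+1) ω - X l ω‖ ^ 2) :=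
          ENNReal.ofReal_le_ofReal h
      _ = B (Finset.univ.sup (jv k ω)) ω := by
          rw [hB_def]
          simp only
          rw [ENNReal.ofReal_mul (Nat.cast_nonneg _), ENNReal.ofReal_natCast,
            ENNReal.ofReal_sum_of_nonneg (fun l _ => sq_nonneg _)]
  -- step 1
  have hstep1 : ∫⁻ ω, ENNReal.ofReal (‖X k ω - xhat k ω‖ ^ 2) ∂μ
      ≤ ∑ j ∈ Finset.range (k+1), ENNReal.ofReal (p j) * ∫⁻ ω, B j ω ∂μ := by
    calc ∫⁻ ω, ENNReal.ofReal (‖X k ω - xhat k ω‖ ^ 2) ∂μ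
        ≤ ∫⁻ ω, ∑ j ∈ Finset.range (k+1),
            Set.indicator {ω' | Finset.univ.sup (jv k ω') = j} (B j) ω ∂μ :=
          lintegral_mono hpoint
      _ = ∑ j ∈ Finset.range (k+1), ∫⁻ ω,
            Set.indicator {ω' | Finset.univ.sup (jv k ω') = j} (B j) ω ∂μ :=
          lintegral_finset_sum _ fun j _ => (hBm j).indicator (hJset j)
      _ = ∑ j ∈ Finset.range (k+1),
            ∫⁻ ω in {ω' | Finset.univ.sup (jv k ω') = j}, B j ω ∂μ :=
          Finset.sum_congr rfl fun j _ => lintegral_indicator (hJset j) _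
      _ ≤ ∑ j ∈ Finset.range (k+1), ENNReal.ofReal (p j) * ∫⁻ ω, B j ω ∂μ :=
          Finset.sum_le_sum fun j _ =>
            key_lemma hm μ _ _ (fun A hA => hpbound k j A hA) (B j) (hBmm j)
  -- integral of B j
  have hBint : ∀ j, ∫⁻ ω, B j ω ∂μ = (j : ENNReal) *
      ∑ i ∈ Finset.Ico (k - j) k, ∫⁻ ω, ENNReal.ofReal (‖X (i+1) ω - X i ω‖ ^ 2) ∂μ := by
    intro j
    rw [hB_def]
    simp only
    rw [lintegral_const_mul _ (Finset.measurable_sum _ fun i _ => hGm i),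
      lintegral_finset_sum _ fun i _ => hGm i]
  set I : ℕ → ENNReal := fun i => ∫⁻ ω, ENNReal.ofReal (‖X (i+1) ω - X i ω‖ ^ 2) ∂μ with hI_def
  -- coefficient bound
  have hcoef : ∀ i ∈ Finset.range k,
      ∑ j ∈ Finset.range (k+1), (if k - j ≤ i then ENNReal.ofReal (p j) * (j : ENNReal) else 0)
        ≤ ENNReal.ofReal (cf (k - 1 - i)) := by
    intro i _
    have hofsum : ∑ j ∈ Finset.range (k+1),
        (if k - j ≤ i then ENNReal.ofReal (p j) * (j : ENNReal) else 0)
        = ENNReal.ofReal (∑ j ∈ Finset.range (k+1), if k - i ≤ j then (j : ℝ) * p j else 0) := by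
      rw [ENNReal.ofReal_sum_of_nonneg (fun j _ => by
        split_ifs with h
        · exact mul_nonneg (Nat.cast_nonneg j) (hp j)
        · exact le_rfl)]
      refine Finset.sum_congr rfl fun j _ => ?_
      rcases le_or_gt (k - i) j with hc | hc
      · rw [if_pos hc, if_pos (by omega : k - j ≤ i),
          ENNReal.ofReal_mul (Nat.cast_nonneg j), ENNReal.ofReal_natCast, mul_comm]
      · rw [if_neg (by omega : ¬ k - j ≤ i), if_neg (by omega : ¬ k - i ≤ j)]
        simp
    rw [hofsum]
    apply ENNReal.ofReal_le_ofReal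
    calc ∑ j ∈ Finset.range (k+1), (if k - i ≤ j then (j : ℝ) * p j else 0)
        ≤ s (k - i) := sum_le_hasSum _ (fun j _ => by
            split_ifs with h
            · exact mul_nonneg (Nat.cast_nonneg j) (hp j)
            · exact le_rfl) (hs (k - i))
      _ ≤ cf (k - 1 - i) := by
          have h := le_hasSum (hcf (k - 1 - i)) (k - i) (fun l _ => by
            split_ifs with h
            · exact hsn l
            · exact le_rfl)
          rwa [if_pos (by omega : k - 1 - i ≤ k - i)] at h
  -- step 2: reindex and swap
  have hstep2 : ∑ j ∈ Finset.range (k+1), ENNReal.ofReal (p j) *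
        ((j : ENNReal) * ∑ i ∈ Finset.Ico (k - j) k, I i)
      ≤ ∑ i ∈ Finset.range k, ENNReal.ofReal (cf (k - 1 - i)) * I i := by
    have hIco : ∀ j, ∑ i ∈ Finset.Ico (k - j) k, I i
        = ∑ i ∈ Finset.range k, if k - j ≤ i then I i else 0 := by
      intro j
      rw [← Finset.sum_filter]
      congr 1
      ext i
      simp only [Finset.mem_Ico, Finset.mem_filter, Finset.mem_range]
      tauto
    calc ∑ j ∈ Finset.range (k+1), ENNReal.ofReal (p j) *
          ((j : ENNReal) * ∑ i ∈ Finset.Ico (k - j) k, I i)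
        = ∑ j ∈ Finset.range (k+1), ∑ i ∈ Finset.range k,
            (if k - j ≤ i then ENNReal.ofReal (p j) * (j : ENNReal) * I i else 0) := by
          refine Finset.sum_congr rfl fun j _ => ?_
          rw [hIco j, Finset.mul_sum, Finset.mul_sum]
          refine Finset.sum_congr rfl fun i _ => ?_
          split_ifs with h
          · ring
          · simp
      _ = ∑ i ∈ Finset.range k, ∑ j ∈ Finset.range (k+1),
            (if k - j ≤ i then ENNReal.ofReal (p j) * (j : ENNReal) * I i else 0) :=
          Finset.sum_comm
      _ ≤ ∑ i ∈ Finset.range k, ENNReal.ofReal (cf (k - 1 - i)) * I i := by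
          refine Finset.sum_le_sum fun i hi => ?_
          have h : ∑ j ∈ Finset.range (k+1),
              (if k - j ≤ i then ENNReal.ofReal (p j) * (j : ENNReal) * I i else 0)
              = (∑ j ∈ Finset.range (k+1),
                  (if k - j ≤ i then ENNReal.ofReal (p j) * (j : ENNReal) else 0)) * I i := by
            rw [Finset.sum_mul]
            refine Finset.sum_congr rfl fun j _ => ?_
            split_ifs with hc
            · rfl
            · simp
          rw [h]
          exact mul_le_mul_left (hcoef i hi) _
  -- main ENNReal inequality
  have hmain : ∫⁻ ω, ENNReal.ofReal (‖X k ω - xhat k ω‖ ^ 2) ∂μ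
      ≤ ∑ i ∈ Finset.range k, ENNReal.ofReal (cf (k - 1 - i)) * I i := by
    refine hstep1.trans ?_
    refine le_trans (le_of_eq (Finset.sum_congr rfl fun j _ => by rw [hBint j])) hstep2
  -- finiteness
  have hfinI : ∀ i, I i ≠ ⊤ := fun i => (hID2 i).lintegral_lt_top.ne
  have hfinterm : ∀ i ∈ Finset.range k,
      ENNReal.ofReal (cf (k - 1 - i)) * I i ≠ ⊤ := fun i _ =>
    ENNReal.mul_ne_top ENNReal.ofReal_ne_top (hfinI i)
  have hne : (∑ i ∈ Finset.range k, ENNReal.ofReal (cf (k - 1 - i)) * I i) ≠ ⊤ := by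
    rw [← lt_top_iff_ne_top]
    exact ENNReal.sum_lt_top.mpr fun i hi => lt_top_iff_ne_top.mpr (hfinterm i hi)
  -- convert to real integrals
  have hDeq : ∫ ω, ‖X k ω - xhat k ω‖ ^ 2 ∂μ
      = (∫⁻ ω, ENNReal.ofReal (‖X k ω - xhat k ω‖ ^ 2) ∂μ).toReal :=
    integral_eq_lintegral_of_nonneg_ae (Filter.Eventually.of_forall fun ω => sq_nonneg _)
      (hId2 k).1
  have hGeq : ∀ i : ℕ, ∫ ω, ‖X (i+1) ω - X i ω‖ ^ 2 ∂μ = (I i).toReal := fun i =>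
    integral_eq_lintegral_of_nonneg_ae (Filter.Eventually.of_forall fun ω => sq_nonneg _)
      (hID2 i).1
  rw [hDeq]
  calc (∫⁻ ω, ENNReal.ofReal (‖X k ω - xhat k ω‖ ^ 2) ∂μ).toReal
      ≤ (∑ i ∈ Finset.range k, ENNReal.ofReal (cf (k - 1 - i)) * I i).toReal :=
        ENNReal.toReal_mono hne hmain
    _ = ∑ i ∈ Finset.range k, (ENNReal.ofReal (cf (k - 1 - i)) * I i).toReal :=
        ENNReal.toReal_sum hfinterm
    _ = ∑ i ∈ Finset.range k, cf (k - 1 - i) * ∫ ω, ‖X (i+1) ω - X i ω‖ ^ 2 ∂μ := by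
        refine Finset.sum_congr rfl fun i _ => ?_
        rw [ENNReal.toReal_mul, ENNReal.toReal_ofReal (hcfn _), hGeq i]
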